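/- Let q be a prime power and let b, n, k be positive integers with b ≤ n. If there exists an F_q-linear code of length n and dimension k whose minimum b-symbol distance is d_b, then there exists an F_q-linear code of length (q^b - 1)·n/(q - 1) and dimension k whose minimum Hamming distance equals q^{b-1}·d_b. -/

import Mathlib

open Projectivization Finset
open scoped LinearAlgebra.Projectivization

lemma fiberwise {b : ℕ} (hb : 0 < b) (F : Type*) [Field F] [Fintype F]
    (R : (Fin b → F) → Prop) (h0 : ∀ v, R v → v ≠ 0)
    (hinv : ∀ (a : Fˣ) (v : Fin b → F), R (a • v) ↔ R v) :
    Nat.card {v : Fin b → F | R v}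
      = Nat.card {p : ℙ F (Fin b → F) | R p.rep} * (Fintype.card F - 1) := by
  classical
  haveI : Finite (ℙ F (Fin b → F)) := Quotient.finite _
  letI : Fintype (ℙ F (Fin b → F)) := Fintype.ofFinite _
  set f : (Fin b → F) → ℙ F (Fin b → F) :=
    fun v => if h : v ≠ 0 then Projectivization.mk F v h else
      Projectivization.mk F (fun _ => 1) (by
        intro h; have := congrFun h ⟨0, hb⟩; simp at this) with hf
  have hfpos : ∀ (v : Fin b → F) (h : v ≠ 0), f v = Projectivization.mk F v h :=
    fun v h => dif_pos h
  have hfR : ∀ v (hv : R v), R (f v).rep := by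
    intro v hv
    have hv0 := h0 v hv
    rw [hfpos v hv0]
    obtain ⟨a, ha⟩ := exists_smul_eq_mk_rep F v hv0
    rw [← ha, hinv]; exact hv
  have key : (univ.filter R).card
      = ∑ p ∈ univ.filter (fun p : ℙ F (Fin b → F) => R p.rep),
          ((univ.filter R).filter (fun v => f v = p)).card := by
    apply Finset.card_eq_sum_card_fiberwise
    intro v hv
    simp only [mem_coe, mem_filter, mem_univ, true_and] at hv ⊢
    exact hfR v hv
  have fib : ∀ p ∈ univ.filter (fun p : ℙ F (Fin b → F) => R p.rep),
      ((univ.filter R).filter (fun v => f v = p)).card = Fintype.card F - 1 := by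
    intro p hp
    simp only [mem_filter, mem_univ, true_and] at hp
    have : (univ.filter R).filter (fun v => f v = p)
        = univ.image (fun a : Fˣ => a • p.rep) := by
      ext v
      simp only [mem_filter, mem_univ, true_and, mem_image]
      constructor
      · rintro ⟨hR, hfv⟩
        have hv0 := h0 v hR
        rw [hfpos v hv0] at hfv
        have : Projectivization.mk F v hv0
            = Projectivization.mk F p.rep p.rep_nonzero := by rw [hfv, mk_rep]
        obtain ⟨a, ha⟩ := (mk_eq_mk_iff F v p.rep hv0 p.rep_nonzero).1 this
        exact ⟨a, ha⟩
      · rintro ⟨a, rfl⟩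
        have hR : R (a • p.rep) := (hinv a p.rep).2 hp
        have hv0 := h0 _ hR
        refine ⟨hR, ?_⟩
        rw [hfpos _ hv0]
        conv_rhs => rw [← p.mk_rep]
        exact (mk_eq_mk_iff F _ _ hv0 p.rep_nonzero).2 ⟨a, rfl⟩
    rw [this, Finset.card_image_of_injective _ ?_, Finset.card_univ, Fintype.card_units]
    intro a a' haa
    obtain ⟨j, hj⟩ : ∃ j, p.rep j ≠ 0 := Function.ne_iff.1 p.rep_nonzero
    have := congrFun haa j
    simp only [Pi.smul_apply, Units.smul_def, smul_eq_mul] at this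
    exact Units.ext (mul_right_cancel₀ hj this)
  rw [Finset.sum_congr rfl fib, Finset.sum_const, smul_eq_mul] at key
  simp only [Nat.card_eq_fintype_card, Fintype.card_subtype, Set.mem_setOf_eq]
  exact key

lemma slice_count {b : ℕ} (hb : 0 < b) (F : Type*) [Field F] [Fintype F]
    (x : Fin b → F) (hx : x ≠ 0) :
    Nat.card {v : Fin b → F | ∑ j, v j * x j ≠ 0}
      = Fintype.card F ^ b - Fintype.card F ^ (b - 1) := by
  classical
  set L : (Fin b → F) → F := fun v => ∑ j, v j * x j with hL
  obtain ⟨j0, hj0⟩ : ∃ j, x j ≠ 0 := Function.ne_iff.1 hx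
  have hsingle : ∀ t : F, L (Pi.single j0 t) = t * x j0 := by
    intro t
    rw [hL]
    simp only
    rw [Finset.sum_eq_single j0]
    · simp
    · intro j _ hj; simp [Pi.single_eq_of_ne hj]
    · simp
  have hadd : ∀ v w : Fin b → F, L (v + w) = L v + L w := by
    intro v w; simp [hL, add_mul, Finset.sum_add_distrib]
  set c0 := (univ.filter (fun v => L v = 0)).card with hc0
  have step1 : ∀ y : F, (univ.filter (fun v => L v = y)).card = c0 := by
    intro y
    rw [hc0]
    apply Finset.card_bij' (fun v _ => v + Pi.single j0 (-y * (x j0)⁻¹))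
      (fun v _ => v + Pi.single j0 (y * (x j0)⁻¹))
    · intro v _; funext j; by_cases h : j = j0 <;> simp [h, Pi.single_apply]
    · intro v _; funext j; by_cases h : j = j0 <;> simp [h, Pi.single_apply]
    · intro v hv
      simp only [mem_filter, mem_univ, true_and] at hv ⊢
      rw [hadd, hv, hsingle]; field_simp; ring
    · intro v hv
      simp only [mem_filter, mem_univ, true_and] at hv ⊢
      rw [hadd, hv, hsingle]; field_simp; ring
  have step2 : Fintype.card F * c0 = Fintype.card F ^ b := by
    have := Finset.card_eq_sum_card_fiberwise
      (f := L) (s := (univ : Finset (Fin b → F))) (t := (univ : Finset F))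
      (fun v _ => mem_univ _)
    rw [Finset.sum_congr rfl (fun y _ => step1 y), Finset.sum_const, smul_eq_mul,
      Finset.card_univ, Finset.card_univ, Fintype.card_pi] at this
    simp only [Finset.prod_const, Finset.card_univ, Fintype.card_fin] at this
    rw [← this]
  have hc0v : c0 = Fintype.card F ^ (b - 1) := by
    have hq : 0 < Fintype.card F := Fintype.card_pos
    apply Nat.eq_of_mul_eq_mul_left hq
    rw [step2, ← pow_succ', Nat.sub_add_cancel hb]
  have step3 : (univ.filter (fun v => ¬ L v = 0)).card = Fintype.card F ^ b - c0 := by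
    have h2 := Finset.card_filter_add_card_filter_not
      (s := (univ : Finset (Fin b → F))) (p := fun v => L v = 0)
    simp only [Finset.card_univ, Fintype.card_pi, Finset.prod_const, Finset.card_univ,
      Fintype.card_fin] at h2
    omega
  rw [hc0v] at step3
  rw [Nat.card_eq_fintype_card, Fintype.card_subtype]
  simp only [Set.mem_setOf_eq, ne_eq]
  simp only [hL] at step3
  exact step3

lemma proj_card {b : ℕ} (hb : 0 < b) (F : Type*) [Field F] [Fintype F] :
    Nat.card (ℙ F (Fin b → F)) * (Fintype.card F - 1) = Fintype.card F ^ b - 1 := by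
  have h := fiberwise hb F (fun v => v ≠ 0) (fun v hv => hv)
    (by intro a v; simp [Units.smul_def, smul_eq_zero, Units.ne_zero])
  have h1 : Nat.card {v : Fin b → F | v ≠ 0} = Fintype.card F ^ b - 1 := by
    classical
    rw [Nat.card_eq_fintype_card]
    have := Fintype.card_subtype_compl (p := fun v : Fin b → F => v = 0)
    simp only [Fintype.card_subtype_eq] at this
    simp only [Set.coe_setOf, ne_eq]
    rw [this]
    simp [Fintype.card_pi]
  have h2 : {p : ℙ F (Fin b → F) | p.rep ≠ 0} = Set.univ := by
    ext p; simp [p.rep_nonzero]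
  rw [h1, h2] at h
  rw [Nat.card_univ] at h
  exact h.symm

lemma proj_slice_card {b : ℕ} (hb : 0 < b) (F : Type*) [Field F] [Fintype F]
    (x : Fin b → F) (hx : x ≠ 0) :
    Nat.card {p : ℙ F (Fin b → F) | ∑ j, p.rep j * x j ≠ 0}
      = Fintype.card F ^ (b - 1) := by
  have h0 : ∀ v : Fin b → F, (∑ j, v j * x j ≠ 0) → v ≠ 0 := by
    intro v hv h; apply hv; simp [h]
  have hinv : ∀ (a : Fˣ) (v : Fin b → F),
      (∑ j, (a • v) j * x j ≠ 0) ↔ (∑ j, v j * x j ≠ 0) := by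
    intro a v
    have : ∑ j, (a • v) j * x j = (a : F) * ∑ j, v j * x j := by
      rw [Finset.mul_sum]
      refine Finset.sum_congr rfl fun j _ => ?_
      simp [Units.smul_def, mul_assoc]
    rw [this, mul_ne_zero_iff]
    simp [Units.ne_zero]
  have h := fiberwise hb F (fun v => ∑ j, v j * x j ≠ 0) h0 hinv
  rw [slice_count hb F x hx] at h
  have hq : 1 < Fintype.card F := Fintype.one_lt_card
  have key : Fintype.card F ^ b - Fintype.card F ^ (b - 1)
      = Fintype.card F ^ (b - 1) * (Fintype.card F - 1) := by
    rw [Nat.mul_sub_left_distrib, mul_one, ← pow_succ, Nat.sub_add_cancel hb]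
  rw [key] at h
  exact Nat.eq_of_mul_eq_mul_right (Nat.sub_pos_of_lt hq) h.symm

/-- The `b`-symbol weight of a vector `c ∈ F^n` (coordinates indexed cyclically by `ZMod n`). -/
noncomputable def bWt {n : ℕ} {F : Type*} [Zero F] (b : ℕ) (c : ZMod n → F) : ℕ :=
  Nat.card {i : ZMod n | ∃ j < b, c (i + (j : ZMod n)) ≠ 0}

/-- The Hamming weight of a vector: its number of nonzero coordinates. -/
noncomputable def hWt {ι : Type*} {F : Type*} [Zero F] (u : ι → F) : ℕ :=
  Nat.card {i : ι | u i ≠ 0}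

/-- If there exists an `(n, k, d_b)^b_q` linear code, then there exists an
`[(q^b-1)·n/(q-1), k, q^{b-1}·d_b]_q` linear code. -/
theorem stmt1 (q b n k d : ℕ) (hb : 0 < b) (hbn : b ≤ n) (hk : 0 < k)
    (F : Type*) [Field F] [Fintype F] (hF : Fintype.card F = q)
    (C : Submodule F (ZMod n → F)) (hdim : Module.finrank F C = k)
    (hd : IsLeast {w | ∃ c ∈ C, c ≠ 0 ∧ bWt b c = w} d) :
    ∃ D : Submodule F (ZMod ((q ^ b - 1) * n / (q - 1)) → F),
      Module.finrank F D = k ∧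
      IsLeast {w | ∃ u ∈ D, u ≠ 0 ∧ hWt u = w} (q ^ (b - 1) * d) := by
  classical
  haveI : NeZero n := ⟨by omega⟩
  have hq2 : 2 ≤ q := by rw [← hF]; exact Fintype.one_lt_card
  haveI : Finite (ℙ F (Fin b → F)) := Quotient.finite _
  letI : Fintype (ℙ F (Fin b → F)) := Fintype.ofFinite _
  set P := ℙ F (Fin b → F) with hP
  set m := Nat.card P with hm
  have hmq : m * (q - 1) = q ^ b - 1 := by rw [hm, ← hF]; exact proj_card hb F
  have hqb : 2 ≤ q ^ b := le_trans hq2 (Nat.le_self_pow (by omega) q)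
  have hm0 : 0 < m := by
    rcases Nat.eq_zero_or_pos m with h | h
    · rw [h, zero_mul] at hmq; omega
    · exact h
  have hN : (q ^ b - 1) * n / (q - 1) = m * n := by
    rw [← hmq, mul_right_comm]
    exact Nat.mul_div_cancel _ (by omega)
  haveI : NeZero ((q ^ b - 1) * n / (q - 1)) := ⟨by rw [hN]; exact Nat.mul_ne_zero (by omega) (by omega)⟩
  have ecard : Fintype.card (ZMod ((q ^ b - 1) * n / (q - 1)))
      = Fintype.card (ZMod n × P) := by
    rw [ZMod.card, hN, Fintype.card_prod, ZMod.card, ← Nat.card_eq_fintype_card, ← hm,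
      mul_comm]
  set e : ZMod ((q ^ b - 1) * n / (q - 1)) ≃ (ZMod n × P) := Fintype.equivOfCardEq ecard
    with he
  set Φ : (ZMod n → F) →ₗ[F] (ZMod ((q ^ b - 1) * n / (q - 1)) → F) :=
    LinearMap.pi (fun t => ∑ j : Fin b,
      ((e t).2.rep j) • LinearMap.proj (R := F) ((e t).1 + ((j : ℕ) : ZMod n))) with hΦ
  have hΦapp : ∀ (c : ZMod n → F) t,
      Φ c t = ∑ j : Fin b, (e t).2.rep j * c ((e t).1 + ((j : ℕ) : ZMod n)) := by
    intro c t
    rw [hΦ]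
    simp [LinearMap.pi_apply, LinearMap.proj_apply]
  -- the weight identity
  have hwt : ∀ c : ZMod n → F, hWt (Φ c) = q ^ (b - 1) * bWt b c := by
    intro c
    unfold hWt bWt
    have e1 : Nat.card {t | Φ c t ≠ 0}
        = Nat.card {y : ZMod n × P |
            ∑ j : Fin b, y.2.rep j * c (y.1 + ((j : ℕ) : ZMod n)) ≠ 0} := by
      apply Nat.card_congr
      apply Equiv.subtypeEquiv e
      intro t
      rw [Set.mem_setOf_eq, Set.mem_setOf_eq, hΦapp]
    rw [e1]
    have e2 : Nat.card {y : ZMod n × P |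
            ∑ j : Fin b, y.2.rep j * c (y.1 + ((j : ℕ) : ZMod n)) ≠ 0}
        = ∑ i : ZMod n, Nat.card {p : P |
            ∑ j : Fin b, p.rep j * c (i + ((j : ℕ) : ZMod n)) ≠ 0} := by
      rw [Nat.card_congr
        (⟨fun y => ⟨y.1.1, y.1.2, y.2⟩, fun s => ⟨(s.1, s.2.1), s.2.2⟩,
          fun y => rfl, fun s => rfl⟩ :
          {y : ZMod n × P | ∑ j : Fin b, y.2.rep j * c (y.1 + ((j : ℕ) : ZMod n)) ≠ 0}
          ≃ Σ i : ZMod n, {p : P | ∑ j : Fin b, p.rep j * c (i + ((j : ℕ) : ZMod n)) ≠ 0})]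
      rw [Nat.card_eq_fintype_card, Fintype.card_sigma]
      exact Finset.sum_congr rfl fun i _ => (Nat.card_eq_fintype_card).symm
    rw [e2]
    have e3 : ∀ i : ZMod n, Nat.card {p : P |
            ∑ j : Fin b, p.rep j * c (i + ((j : ℕ) : ZMod n)) ≠ 0}
        = if (∃ j < b, c (i + (j : ZMod n)) ≠ 0) then q ^ (b - 1) else 0 := by
      intro i
      by_cases hx : (fun j : Fin b => c (i + ((j : ℕ) : ZMod n))) ≠ 0
      · have hcond : ∃ j < b, c (i + (j : ZMod n)) ≠ 0 := by
          obtain ⟨j, hj⟩ := Function.ne_iff.1 hx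
          exact ⟨(j : ℕ), j.2, by simpa using hj⟩
        rw [if_pos hcond, ← hF]
        exact proj_slice_card hb F _ hx
      · push_neg at hx
        have hcond : ¬ ∃ j < b, c (i + (j : ZMod n)) ≠ 0 := by
          rintro ⟨j, hjb, hj⟩
          exact hj (by simpa using congrFun hx ⟨j, hjb⟩)
        rw [if_neg hcond]
        have hset : {p : P | ∑ j : Fin b, p.rep j * c (i + ((j : ℕ) : ZMod n)) ≠ 0}
            = ∅ := by
          ext p
          simp only [Set.mem_setOf_eq, Set.mem_empty_iff_false, iff_false, not_not]
          apply Finset.sum_eq_zero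
          intro j _
          have hcj : c (i + ((j : ℕ) : ZMod n)) = 0 := by simpa using congrFun hx j
          rw [hcj, mul_zero]
        rw [hset, Nat.card_coe_set_eq, Set.ncard_empty]
    simp only [e3]
    rw [Finset.sum_ite, Finset.sum_const, Finset.sum_const_zero, add_zero, smul_eq_mul,
      Nat.card_eq_fintype_card, Fintype.card_subtype, mul_comm]
    simp only [Set.mem_setOf_eq]
  -- injectivity of Φ
  have hinj : Function.Injective Φ := by
    rw [← LinearMap.ker_eq_bot, Submodule.eq_bot_iff]
    intro c hc
    by_contra hc0
    obtain ⟨i, hi⟩ := Function.ne_iff.1 hc0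
    have hne : {i : ZMod n | ∃ j < b, c (i + (j : ZMod n)) ≠ 0}.Nonempty :=
      ⟨i, 0, hb, by simpa using hi⟩
    haveI := hne.to_subtype
    have hpos : 0 < bWt b c := Nat.card_pos
    have h0 : hWt (Φ c) = 0 := by
      have hz : Φ c = 0 := LinearMap.mem_ker.1 hc
      rw [hz]
      unfold hWt
      simp
    rw [hwt c] at h0
    rcases Nat.mul_eq_zero.1 h0 with h | h
    · exact absurd h (by positivity)
    · omega
  refine ⟨Submodule.map Φ C, ?_, ?_, ?_⟩
  · rw [← hdim]
    exact (Submodule.equivMapOfInjective Φ hinj C).symm.finrank_eq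
  · obtain ⟨c, hcC, hc0, hcw⟩ := hd.1
    refine ⟨Φ c, Submodule.mem_map_of_mem hcC, ?_, by rw [hwt, hcw]⟩
    intro h
    exact hc0 (hinj (by rw [h, map_zero]))
  · rintro w ⟨u, huD, hu0, rfl⟩
    obtain ⟨c, hcC, rfl⟩ := huD
    have hc0 : c ≠ 0 := by
      rintro rfl
      rw [map_zero] at hu0
      exact hu0 rfl
    have hle : d ≤ bWt b c := hd.2 ⟨c, hcC, hc0, rfl⟩
    rw [hwt]
    exact Nat.mul_le_mul_left _ hle
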